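/- Let p ≥ 1 be an integer and let 𝒥 be a finite job set in which every job J has width 2^{p−1} < w(J) ≤ 2^p. Define the 'nice' job set 𝒥* by replacing each J ∈ 𝒥 with the job J* having width w(J*) = 2^p, height h(J), release time r(J*) = r(J), and deadline d(J*) = r(J) + max(d(J) − r(J), 2^p). Then OPT(𝒥*) ≤ 3^α · OPT(𝒥). -/

import Mathlib

open scoped BigOperators NNReal

structure Job where
  r : ℤ
  d : ℤ
  w : ℤ
  h : ℝ

def Job.Valid (J : Job) : Prop := 1 ≤ J.w ∧ 0 < J.h ∧ J.r + J.w ≤ J.d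

def Feasible {ι : Type*} (job : ι → Job) (st : ι → ℤ) : Prop :=
  ∀ i, (job i).r ≤ st i ∧ st i + (job i).w ≤ (job i).d

noncomputable def load {ι : Type*} [Fintype ι] (job : ι → Job) (st : ι → ℤ) (t : ℤ) : ℝ :=
  ∑ i, if st i ≤ t ∧ t < st i + (job i).w then (job i).h else 0

noncomputable def cost {ι : Type*} [Fintype ι] (α : ℝ) (job : ι → Job) (st : ι → ℤ) : ℝ :=
  ∑' t : ℤ, load job st t ^ α

noncomputable def OPT {ι : Type*} [Fintype ι] (α : ℝ) (job : ι → Job) : ℝ :=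
  sInf {c : ℝ | ∃ st, Feasible job st ∧ cost α job st = c}

noncomputable def den (J : Job) : ℝ := (J.w * J.h) / (J.d - J.r)

noncomputable def avg {ι : Type*} [Fintype ι] (job : ι → Job) (t : ℤ) : ℝ :=
  ∑ i, if (job i).r ≤ t ∧ t < (job i).d then den (job i) else 0

lemma three_mean {a b c α : ℝ} (hα : 1 ≤ α) (ha : 0 ≤ a) (hb : 0 ≤ b) (hc : 0 ≤ c) :
    (a + b + c) ^ α ≤ 3 ^ α / 3 * (a ^ α + b ^ α + c ^ α) := by
  have key := Real.rpow_arith_mean_le_arith_mean_rpow Finset.univ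
      (fun _ : Fin 3 => (3:ℝ)⁻¹) ![a, b, c]
      (fun i _ => by norm_num) (by norm_num [Fin.sum_univ_three])
      (fun i _ => by fin_cases i <;> assumption) hα
  simp only [Fin.sum_univ_three, Matrix.cons_val_zero, Matrix.cons_val_one, Matrix.head_cons,
    Matrix.cons_val_two, Matrix.tail_cons] at key
  have h1 : (3:ℝ)⁻¹ * a + 3⁻¹ * b + 3⁻¹ * c = (a + b + c) / 3 := by ring
  rw [h1, Real.div_rpow (by linarith) (by norm_num)] at key
  have h3 : (0:ℝ) < 3 ^ α := Real.rpow_pos_of_pos (by norm_num) α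
  rw [div_le_iff₀ h3] at key
  calc (a + b + c) ^ α ≤ (3⁻¹ * a ^ α + 3⁻¹ * b ^ α + 3⁻¹ * c ^ α) * 3 ^ α := key
  _ = 3 ^ α / 3 * (a ^ α + b ^ α + c ^ α) := by ring

lemma load_nonneg {ι : Type*} [Fintype ι] {job : ι → Job} (st : ι → ℤ)
    (hh : ∀ i, 0 ≤ (job i).h) (t : ℤ) : 0 ≤ load job st t := by
  refine Finset.sum_nonneg fun i _ => ?_
  split <;> simp [hh i]

lemma summable_cost {ι : Type*} [Fintype ι] {α : ℝ} (hα : α ≠ 0) (job : ι → Job) (st : ι → ℤ) :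
    Summable (fun t => load job st t ^ α) := by
  apply summable_of_ne_finset_zero
    (s := Finset.univ.biUnion fun i => Finset.Ico (st i) (st i + (job i).w))
  intro t ht
  have hl : load job st t = 0 := by
    refine Finset.sum_eq_zero fun i _ => ?_
    rw [if_neg]
    intro hcond
    exact ht (Finset.mem_biUnion.mpr ⟨i, Finset.mem_univ i, Finset.mem_Ico.mpr hcond⟩)
  rw [hl, Real.zero_rpow hα]

theorem stmt8 {ι : Type*} [Fintype ι] (α : ℝ) (hα : 1 < α) (p : ℕ) (hp : 1 ≤ p)
    (job job' : ι → Job) (hv : ∀ i, (job i).Valid)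
    (hw : ∀ i, (2 : ℤ) ^ (p - 1) < (job i).w ∧ (job i).w ≤ (2 : ℤ) ^ p)
    (hjob' : ∀ i, job' i =
      ⟨(job i).r, (job i).r + max ((job i).d - (job i).r) ((2 : ℤ) ^ p),
        (2 : ℤ) ^ p, (job i).h⟩) :
    OPT α job' ≤ 3 ^ α * OPT α job := by
  obtain ⟨q, rfl⟩ : ∃ q, p = q + 1 := ⟨p - 1, by omega⟩
  have hα0 : (0:ℝ) < α := by linarith
  have hαne : α ≠ 0 := ne_of_gt hα0
  have h3pos : (0:ℝ) < 3 ^ α := Real.rpow_pos_of_pos (by norm_num) α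
  have hh : ∀ i, 0 ≤ (job i).h := fun i => le_of_lt (hv i).2.1
  have hh' : ∀ i, 0 ≤ (job' i).h := fun i => by rw [hjob' i]; exact hh i
  set K : ℤ := 2 ^ q with hK
  have hpow : (2:ℤ) ^ (q + 1) = 2 * K := by rw [hK]; ring
  have hwq : ∀ i, K < (job i).w ∧ (job i).w ≤ 2 * K := by
    intro i
    have := hw i
    simp only [Nat.add_sub_cancel, hpow] at this
    exact this
  set S := {c : ℝ | ∃ st, Feasible job st ∧ cost α job st = c} with hS
  have hSne : S.Nonempty :=
    ⟨_, fun i => (job i).r, fun i => ⟨le_refl _, (hv i).2.2⟩, rfl⟩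
  set S' := {c : ℝ | ∃ st, Feasible job' st ∧ cost α job' st = c} with hS'
  have hS'bdd : BddBelow S' := by
    refine ⟨0, ?_⟩
    rintro x ⟨st0, _, rfl⟩
    exact tsum_nonneg fun t => Real.rpow_nonneg (load_nonneg st0 hh' t) α
  have main : ∀ x ∈ S, OPT α job' ≤ 3 ^ α * x := by
    rintro x ⟨st, hfeas, rfl⟩
    set st' : ι → ℤ := fun i =>
      min (st i) ((job i).r + max ((job i).d - (job i).r) (2 ^ (q + 1)) - 2 ^ (q + 1)) with hst'
    have hfeas' : Feasible job' st' := by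
      intro i
      rw [hjob' i]
      obtain ⟨h1, h2⟩ := hfeas i
      have := (hwq i)
      simp only [hst', hpow]
      constructor
      · omega
      · omega
    -- coverage
    have cover : ∀ i t, st' i ≤ t ∧ t < st' i + 2 ^ (q + 1) →
        ((st i ≤ t - K ∧ t - K < st i + (job i).w) ∨
         (st i ≤ t ∧ t < st i + (job i).w) ∨
         (st i ≤ t + K ∧ t + K < st i + (job i).w)) := by
      intro i t ht
      obtain ⟨h1, h2⟩ := hfeas i
      obtain ⟨h3, h4⟩ := hwq i
      simp only [hst', hpow] at ht
      omega
    have hload : ∀ t, load job' st' t ≤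
        load job st (t - K) + load job st t + load job st (t + K) := by
      intro t
      unfold load
      rw [← Finset.sum_add_distrib, ← Finset.sum_add_distrib]
      refine Finset.sum_le_sum fun i _ => ?_
      rw [hjob' i]
      dsimp only
      have hA : (0:ℝ) ≤ if st i ≤ t - K ∧ t - K < st i + (job i).w then (job i).h else 0 := by
        split <;> simp [hh i]
      have hB : (0:ℝ) ≤ if st i ≤ t ∧ t < st i + (job i).w then (job i).h else 0 := by
        split <;> simp [hh i]
      have hC : (0:ℝ) ≤ if st i ≤ t + K ∧ t + K < st i + (job i).w then (job i).h else 0 := by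
        split <;> simp [hh i]
      by_cases hc : st' i ≤ t ∧ t < st' i + 2 ^ (q + 1)
      · rw [if_pos hc]
        rcases cover i t hc with h | h | h
        · rw [if_pos h]; linarith
        · rw [if_pos h] at hB ⊢; linarith
        · rw [if_pos h] at hC ⊢; linarith
      · rw [if_neg hc]
        linarith
    have sB : Summable (fun t => load job st t ^ α) := summable_cost hαne job st
    have sA : Summable (fun t : ℤ => load job st (t - K) ^ α) := by
      have := (Equiv.subRight K).summable_iff (f := fun t : ℤ => load job st t ^ α)
      exact this.mpr sB
    have sC : Summable (fun t : ℤ => load job st (t + K) ^ α) := by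
      have := (Equiv.addRight K).summable_iff (f := fun t : ℤ => load job st t ^ α)
      exact this.mpr sB
    have hpt : ∀ t, load job' st' t ^ α ≤
        3 ^ α / 3 * (load job st (t - K) ^ α + load job st t ^ α + load job st (t + K) ^ α) := by
      intro t
      calc load job' st' t ^ α
          ≤ (load job st (t - K) + load job st t + load job st (t + K)) ^ α :=
            Real.rpow_le_rpow (load_nonneg st' hh' t) (hload t) (le_of_lt hα0)
        _ ≤ _ := three_mean (le_of_lt hα) (load_nonneg st hh _) (load_nonneg st hh _)
            (load_nonneg st hh _)
    have sLHS : Summable (fun t => load job' st' t ^ α) := summable_cost hαne job' st'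
    have sRHS : Summable (fun t : ℤ => 3 ^ α / 3 *
        (load job st (t - K) ^ α + load job st t ^ α + load job st (t + K) ^ α)) :=
      ((sA.add sB).add sC).mul_left _
    have hA_eq : ∑' t : ℤ, load job st (t - K) ^ α = cost α job st := by
      have := (Equiv.subRight K).tsum_eq (f := fun t : ℤ => load job st t ^ α)
      exact this
    have hC_eq : ∑' t : ℤ, load job st (t + K) ^ α = cost α job st := by
      have := (Equiv.addRight K).tsum_eq (f := fun t : ℤ => load job st t ^ α)
      exact this
    have hcost : cost α job' st' ≤ 3 ^ α * cost α job st := by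
      have step1 : cost α job' st' ≤ ∑' t : ℤ, 3 ^ α / 3 *
          (load job st (t - K) ^ α + load job st t ^ α + load job st (t + K) ^ α) :=
        Summable.tsum_le_tsum hpt sLHS sRHS
      have step2 : (∑' t : ℤ, 3 ^ α / 3 *
          (load job st (t - K) ^ α + load job st t ^ α + load job st (t + K) ^ α))
          = 3 ^ α / 3 * (cost α job st + cost α job st + cost α job st) := by
        rw [tsum_mul_left, Summable.tsum_add (sA.add sB) sC, Summable.tsum_add sA sB, hA_eq, hC_eq]
        rfl
      have step3 : (3:ℝ) ^ α / 3 * (cost α job st + cost α job st + cost α job st)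
          = 3 ^ α * cost α job st := by ring
      rw [step2, step3] at step1
      exact step1
    have hmem : cost α job' st' ∈ S' := ⟨st', hfeas', rfl⟩
    exact le_trans (csInf_le hS'bdd hmem) hcost
  have hdiv : OPT α job' / 3 ^ α ≤ sInf S :=
    le_csInf hSne fun x hx => (div_le_iff₀ h3pos).mpr (by rw [mul_comm]; exact main x hx)
  have : OPT α job' ≤ sInf S * 3 ^ α := (div_le_iff₀ h3pos).mp hdiv
  rw [mul_comm] at this
  exact this
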